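/- The competition graph of a doubly partial order is an interval graph. That is, if D is a digraph whose vertex set is a finite set V ⊆ ℝ² and whose arcs are exactly the pairs (x,v) with v ≺ x, then the graph on V in which distinct u,w are adjacent iff there exists z ∈ V with z ≺ u and z ≺ w is an interval graph. -/

import Mathlib

/-- `prec x y` means `x₁ < y₁` and `x₂ < y₂`, written `x ≺ y`. -/
def prec (x y : ℝ × ℝ) : Prop := x.1 < y.1 ∧ x.2 < y.2

/-- The competition graph of the doubly partial order on a finite set
`V ⊆ ℝ²` (arcs `(x,v)` exactly when `v ≺ x`): distinct `u`, `w` are adjacent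
iff there is `z ∈ V` with `z ≺ u` and `z ≺ w`. -/
def competitionGraph (V : Finset (ℝ × ℝ)) : SimpleGraph {p : ℝ × ℝ // p ∈ V} where
  Adj u w := u ≠ w ∧ ∃ z ∈ V, prec z u.1 ∧ prec z w.1
  symm := by
    constructor
    intro u w h
    exact ⟨Ne.symm h.1, by tauto⟩
  loopless := by
    constructor
    intro u h
    exact h.1 rfl

/-- The set of prey of `v` among `V`. -/
noncomputable def preySet (V : Finset (ℝ × ℝ)) (v : ℝ × ℝ) : Finset (ℝ × ℝ) :=
  @Finset.filter _ (fun z => prec z v) (Classical.decPred _) V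

lemma mem_preySet {V : Finset (ℝ × ℝ)} {v z : ℝ × ℝ} :
    z ∈ preySet V v ↔ z ∈ V ∧ prec z v := by
  simp [preySet, Finset.mem_filter]

/-- Key lemma: if the x-coordinate intervals overlap (asymmetric form),
there is a common prey. -/
lemma key (V : Finset (ℝ × ℝ)) (u w : ℝ × ℝ)
    (hu : (preySet V u).Nonempty) (hw : (preySet V w).Nonempty)
    (hbb : (preySet V u).sup' hu Prod.fst ≤ (preySet V w).sup' hw Prod.fst)
    (haw : (preySet V w).inf' hw Prod.fst ≤ (preySet V u).sup' hu Prod.fst) :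
    ∃ z ∈ V, prec z u ∧ prec z w := by
  obtain ⟨z, hz, hz1⟩ := Finset.exists_mem_eq_sup' hu Prod.fst
  obtain ⟨t, ht, ht1⟩ := Finset.exists_mem_eq_inf' hw Prod.fst
  obtain ⟨z', hz', hz'1⟩ := Finset.exists_mem_eq_sup' hw Prod.fst
  rw [mem_preySet] at hz ht hz'
  rcases lt_or_ge t.2 z.2 with h | h
  · -- common prey t
    refine ⟨t, ht.1, ⟨?_, ?_⟩, ht.2⟩
    · calc t.1 = (preySet V w).inf' hw Prod.fst := ht1.symm
        _ ≤ (preySet V u).sup' hu Prod.fst := haw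
        _ = z.1 := hz1
        _ < u.1 := hz.2.1
    · exact h.trans hz.2.2
  · -- common prey z
    refine ⟨z, hz.1, hz.2, ?_, ?_⟩
    · calc z.1 = (preySet V u).sup' hu Prod.fst := hz1.symm
        _ ≤ (preySet V w).sup' hw Prod.fst := hbb
        _ = z'.1 := hz'1
        _ < w.1 := hz'.2.1
    · exact lt_of_le_of_lt h ht.2.2

/-- The competition graph of a doubly partial order is an interval graph. -/
theorem competitionGraph_isIntervalGraph (V : Finset (ℝ × ℝ)) :
    ∃ J : {p : ℝ × ℝ // p ∈ V} → Set ℝ,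
      (∀ v, ∃ a b : ℝ, a ≤ b ∧ J v = Set.Icc a b) ∧
      (∀ u w, u ≠ w → ((competitionGraph V).Adj u w ↔ (J u ∩ J w).Nonempty)) := by
  classical
  rcases V.eq_empty_or_nonempty with hV | hV
  · refine ⟨fun _ => Set.Icc 0 0, fun _ => ⟨0, 0, le_rfl, rfl⟩, fun u _ _ => ?_⟩
    exact absurd u.2 (by simp [hV])
  · set M : ℝ := V.sup' hV Prod.fst with hM
    set e := Fintype.equivFin {p : ℝ × ℝ // p ∈ V} with he
    set c : {p : ℝ × ℝ // p ∈ V} → ℝ := fun v => M + 1 + (e v : ℕ) with hc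
    -- every prey sup/inf is at most M
    have hsupM : ∀ (v : ℝ × ℝ) (h : (preySet V v).Nonempty),
        (preySet V v).sup' h Prod.fst ≤ M := by
      intro v h
      apply Finset.sup'_le
      intro z hz
      exact Finset.le_sup' (f := Prod.fst) ((mem_preySet.mp hz).1)
    have hMc : ∀ v : {p : ℝ × ℝ // p ∈ V}, M < c v := by
      intro v
      have : (0 : ℝ) ≤ ((e v : ℕ) : ℝ) := Nat.cast_nonneg _
      simp only [hc]
      linarith
    have hcinj : Function.Injective c := by
      intro a b hab
      simp only [hc] at hab
      have : ((e a : ℕ) : ℝ) = ((e b : ℕ) : ℝ) := by linarith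
      have : (e a : ℕ) = (e b : ℕ) := Nat.cast_injective this
      exact e.injective (Fin.ext this)
    refine ⟨fun v => if h : (preySet V v.1).Nonempty then
        Set.Icc ((preySet V v.1).inf' h Prod.fst) ((preySet V v.1).sup' h Prod.fst)
      else Set.Icc (c v) (c v), ?_, ?_⟩
    · intro v
      by_cases h : (preySet V v.1).Nonempty
      · obtain ⟨z, hz⟩ := id h
        exact ⟨(preySet V v.1).inf' h Prod.fst, (preySet V v.1).sup' h Prod.fst,
          le_trans (Finset.inf'_le _ hz) (Finset.le_sup' _ hz), by simp [h]⟩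
      · exact ⟨c v, c v, le_rfl, by simp [h]⟩
    · intro u w huw
      constructor
      · rintro ⟨-, z, hzV, hzu, hzw⟩
        have hzu' : z ∈ preySet V u.1 := mem_preySet.mpr ⟨hzV, hzu⟩
        have hzw' : z ∈ preySet V w.1 := mem_preySet.mpr ⟨hzV, hzw⟩
        have hu : (preySet V u.1).Nonempty := ⟨z, hzu'⟩
        have hw : (preySet V w.1).Nonempty := ⟨z, hzw'⟩
        refine ⟨z.1, ?_⟩
        simp only [hu, hw, dif_pos, Set.mem_inter_iff, Set.mem_Icc]
        exact ⟨⟨Finset.inf'_le _ hzu', Finset.le_sup' _ hzu'⟩,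
               ⟨Finset.inf'_le _ hzw', Finset.le_sup' _ hzw'⟩⟩
      · rintro ⟨t, htu, htw⟩
        by_cases hu : (preySet V u.1).Nonempty
        · by_cases hw : (preySet V w.1).Nonempty
          · simp only [hu, hw, dif_pos, Set.mem_Icc] at htu htw
            refine ⟨huw, ?_⟩
            rcases le_total ((preySet V u.1).sup' hu Prod.fst)
                ((preySet V w.1).sup' hw Prod.fst) with hbb | hbb
            · exact key V u.1 w.1 hu hw hbb (le_trans htw.1 htu.2)
            · obtain ⟨z, hzV, hzw, hzu⟩ :=
                key V w.1 u.1 hw hu hbb (le_trans htu.1 htw.2)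
              exact ⟨z, hzV, hzu, hzw⟩
          · exfalso
            simp only [hu, hw, dif_pos, dif_neg, not_false_iff, Set.mem_Icc] at htu htw
            have h1 : t ≤ M := le_trans htu.2 (hsupM _ hu)
            have h2 : c w ≤ t := htw.1
            exact absurd (lt_of_lt_of_le (hMc w) (h2.trans h1)) (lt_irrefl M)
        · exfalso
          simp only [hu, dif_neg, not_false_iff, Set.mem_Icc] at htu
          have htcu : t = c u := le_antisymm htu.2 htu.1
          by_cases hw : (preySet V w.1).Nonempty
          · simp only [hw, dif_pos, Set.mem_Icc] at htw
            have h1 : t ≤ M := le_trans htw.2 (hsupM _ hw)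
            rw [htcu] at h1
            exact absurd (lt_of_lt_of_le (hMc u) h1) (lt_irrefl M)
          · simp only [hw, dif_neg, not_false_iff, Set.mem_Icc] at htw
            have htcw : t = c w := le_antisymm htw.2 htw.1
            exact huw (hcinj (htcu.symm.trans htcw))
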